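/- Let m > 0 and χ > 0 satisfy mχ < 4π. Define ε = (4π - mχ)/(16π m χ) and γ = (√(2π/(4π+mχ)) - 1/2)χ. Then γ > 0, and A := χ/2 - m(1/(8π)+ε)(χ+γ)² = ((4π+mχ)χ/(16π)) (√(2π/(4π+mχ)) - 1/2)(3√(2π/(4π+mχ)) + 1/2) > 0. -/

import Mathlib

open Real

theorem stmt4 (m χ : ℝ) (hm : 0 < m) (hχ : 0 < χ) (hmc : m * χ < 4 * π) :
    let ε := (4 * π - m * χ) / (16 * π * m * χ)
    let γ := (Real.sqrt (2 * π / (4 * π + m * χ)) - 1 / 2) * χ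
    0 < γ ∧
      χ / 2 - m * (1 / (8 * π) + ε) * (χ + γ) ^ 2 =
        ((4 * π + m * χ) * χ / (16 * π)) *
          (Real.sqrt (2 * π / (4 * π + m * χ)) - 1 / 2) *
          (3 * Real.sqrt (2 * π / (4 * π + m * χ)) + 1 / 2) ∧
      0 < χ / 2 - m * (1 / (8 * π) + ε) * (χ + γ) ^ 2 := by
  intro ε γ
  have hπ := Real.pi_pos
  have hQ : 0 < 4 * π + m * χ := by positivity
  simp only [ε, γ]
  set s := Real.sqrt (2 * π / (4 * π + m * χ)) with hs
  have hs2 : (4 * π + m * χ) * s ^ 2 = 2 * π := by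
    rw [hs, Real.sq_sqrt (by positivity)]
    field_simp
  have hshalf : 1 / 2 < s := by
    rw [hs, show (1:ℝ)/2 = Real.sqrt (1/4) by
      rw [show (1:ℝ)/4 = (1/2)^2 by norm_num, Real.sqrt_sq (by norm_num)]]
    apply Real.sqrt_lt_sqrt (by norm_num)
    rw [lt_div_iff₀ hQ]; nlinarith
  clear_value s
  have hπ' : π ≠ 0 := ne_of_gt hπ
  have hm' : m ≠ 0 := ne_of_gt hm
  have hχ' : χ ≠ 0 := ne_of_gt hχ
  have key : m * (1 / (8 * π) + (4 * π - m * χ) / (16 * π * m * χ)) =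
      (4 * π + m * χ) / (16 * π * χ) := by
    field_simp; ring
  have hγ : 0 < (s - 1 / 2) * χ := by
    have : 0 < s - 1/2 := by linarith
    positivity
  have heq : χ / 2 - m * (1 / (8 * π) + (4 * π - m * χ) / (16 * π * m * χ)) *
        (χ + (s - 1 / 2) * χ) ^ 2 =
      (4 * π + m * χ) * χ / (16 * π) * (s - 1 / 2) * (3 * s + 1 / 2) := by
    rw [key]
    field_simp
    linear_combination (-16) * hs2
  refine ⟨hγ, heq, ?_⟩
  rw [heq]
  have h1 : 0 < s - 1/2 := by linarith
  have h2 : 0 < 3 * s + 1/2 := by linarith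
  positivity
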